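/- Integrated MOSS deviation bound: Let (X_k)_{k≥1} be i.i.d. random variables with X_k ∈ [0,1] and mean μ, and let X̄_s = (1/s)Σ_{k=1}^{s} X_k. Let M and T be reals with 0 < 2M ≤ T, let m ≥ 1 be an integer, and set ζ = √(2M/T). Then ∫_ζ^∞ Σ_{s=1}^{m} P( X̄_s + √( (2/s)·max( log(T/(M·s)), 0 ) ) − μ > y ) dy ≤ 19·√(T/M). -/

import Mathlib

open MeasureTheory ProbabilityTheory


lemma moss_sum_telescope_le (g : ℕ → ℝ) (hg : ∀ k, 0 ≤ g k) (a b : ℕ) :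
    ∑ s ∈ Finset.Icc a b, (g s - g (s+1)) ≤ g a := by
  rw [← Finset.Ico_add_one_right_eq_Icc, Finset.sum_Ico_eq_sum_range]
  have : ∀ i, g (a + i) - g (a + i + 1) = (fun j => g (a + j)) i - (fun j => g (a + j)) (i + 1) := by
    intro i; simp [Nat.add_assoc]
  simp_rw [this]
  rw [Finset.sum_range_sub' (fun j => g (a + j))]
  simp [hg]

lemma moss_sum_step (φ f : ℕ → ℝ) (N : ℕ) (hφ0 : φ 0 = 0)
    (h : ∀ i : ℕ, f (1 + i) ≤ φ (i + 1) - φ i) :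
    ∑ s ∈ Finset.Icc 1 N, f s ≤ φ N := by
  rw [← Finset.Ico_add_one_right_eq_Icc, Finset.sum_Ico_eq_sum_range]
  calc ∑ i ∈ Finset.range (N + 1 - 1), f (1 + i)
      ≤ ∑ i ∈ Finset.range (N + 1 - 1), (φ (i + 1) - φ i) :=
        Finset.sum_le_sum fun i _ => h i
    _ = φ (N + 1 - 1) - φ 0 := Finset.sum_range_sub φ _
    _ = φ N := by simp [hφ0]

lemma moss_sum_inv_sqrt (N : ℕ) :
    ∑ s ∈ Finset.Icc 1 N, 1 / Real.sqrt s ≤ 2 * Real.sqrt N := by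
  refine moss_sum_step (fun i => 2 * Real.sqrt i) _ N (by simp) (fun i => ?_)
  have h1 : ((1 + i : ℕ) : ℝ) = ((i + 1 : ℕ) : ℝ) := by push_cast; ring
  rw [h1]
  have hx : (0:ℝ) < Real.sqrt ((i + 1 : ℕ) : ℝ) := Real.sqrt_pos.2 (by positivity)
  have hy : (0:ℝ) ≤ Real.sqrt (i:ℕ) := Real.sqrt_nonneg _
  have hxsq : (Real.sqrt ((i+1:ℕ):ℝ))^2 = ((i+1:ℕ):ℝ) := Real.sq_sqrt (by positivity)
  have hysq : (Real.sqrt ((i:ℕ):ℝ))^2 = ((i:ℕ):ℝ) := Real.sq_sqrt (by positivity)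
  rw [div_le_iff₀ hx]
  have hcast : ((i+1:ℕ):ℝ) = ((i:ℕ):ℝ) + 1 := by push_cast; ring
  nlinarith [hx, hy, sq_nonneg (Real.sqrt ((i+1:ℕ):ℝ) - Real.sqrt ((i:ℕ):ℝ))]

lemma moss_sum_inv_q3 (N : ℕ) :
    ∑ s ∈ Finset.Icc 1 N, 1 / (Real.sqrt (Real.sqrt s))^3
      ≤ 4 * Real.sqrt (Real.sqrt N) := by
  refine moss_sum_step (fun i => 4 * Real.sqrt (Real.sqrt i)) _ N (by simp) (fun i => ?_)
  have h1 : ((1 + i : ℕ) : ℝ) = ((i + 1 : ℕ) : ℝ) := by push_cast; ring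
  rw [h1]
  set x := Real.sqrt (Real.sqrt ((i + 1 : ℕ) : ℝ)) with hxdef
  set y := Real.sqrt (Real.sqrt ((i : ℕ) : ℝ)) with hydef
  have hx : (0:ℝ) < x := by
    apply Real.sqrt_pos.2; apply Real.sqrt_pos.2; positivity
  have hy : (0:ℝ) ≤ y := Real.sqrt_nonneg _
  have hx4 : x^4 = ((i + 1 : ℕ) : ℝ) := by
    rw [hxdef, show (4:ℕ) = 2*2 from rfl, pow_mul, Real.sq_sqrt (Real.sqrt_nonneg _),
      Real.sq_sqrt (by positivity)]
  have hy4 : y^4 = ((i : ℕ) : ℝ) := by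
    rw [hydef, show (4:ℕ) = 2*2 from rfl, pow_mul, Real.sq_sqrt (Real.sqrt_nonneg _),
      Real.sq_sqrt (by positivity)]
  have hxy : y ≤ x := by
    rw [hxdef, hydef]
    apply Real.sqrt_le_sqrt; apply Real.sqrt_le_sqrt; push_cast; linarith
  rw [div_le_iff₀ (by positivity)]
  have hdiff : x^4 - y^4 = 1 := by rw [hx4, hy4]; push_cast; ring
  nlinarith [hdiff, mul_nonneg (sq_nonneg (x - y)) (by positivity : (0:ℝ) ≤ 3*x^2 + 2*x*y + y^2)]


lemma moss_exp_neg_le (x : ℝ) (hx : 0 < x) : Real.exp (-x) ≤ 1/x := by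
  rw [Real.exp_neg, one_div]
  exact inv_anti₀ hx (by linarith [Real.add_one_le_exp x])

lemma moss_exp_neg_le_sq (x : ℝ) (hx : 0 < x) : Real.exp (-x) ≤ 4/x^2 := by
  rw [Real.exp_neg]
  have h1 : x^2/4 ≤ Real.exp x := by
    have h2 : x/2 ≤ Real.exp (x/2) := by linarith [Real.add_one_le_exp (x/2)]
    have h3 : (x/2)^2 ≤ (Real.exp (x/2))^2 := by nlinarith [Real.exp_pos (x/2)]
    rw [← Real.exp_nat_mul] at h3
    calc x^2/4 = (x/2)^2 := by ring
      _ ≤ Real.exp (↑(2:ℕ) * (x/2)) := h3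
      _ = Real.exp x := by congr 1; push_cast; ring
  calc (Real.exp x)⁻¹ ≤ (x^2/4)⁻¹ := inv_anti₀ (by positivity) h1
    _ = 4/x^2 := by rw [inv_div]
  
lemma moss_log_le (x : ℝ) (hx : 0 < x) : Real.log x ≤ 2 / Real.exp 1 * Real.sqrt x := by
  have hsx : 0 < Real.sqrt x := Real.sqrt_pos.2 hx
  have h1 : Real.log (Real.sqrt x) ≤ Real.sqrt x / Real.exp 1 := by
    have h2 := Real.log_le_sub_one_of_pos (show 0 < Real.sqrt x / Real.exp 1 by positivity)
    rw [Real.log_div hsx.ne' (Real.exp_pos 1).ne', Real.log_exp] at h2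
    linarith
  have h3 : Real.log x = 2 * Real.log (Real.sqrt x) := by
    rw [Real.log_sqrt hx.le]; ring
  calc Real.log x = 2 * Real.log (Real.sqrt x) := h3
    _ ≤ 2 * (Real.sqrt x / Real.exp 1) := by linarith
    _ = 2 / Real.exp 1 * Real.sqrt x := by ring

lemma moss_E_bound (n : ℝ) (hn : 0 < n) (s : ℕ) (hs1 : 1 ≤ s) :
    Real.sqrt ((2/(s:ℝ)) * max (Real.log (n/(s:ℝ))) 0)
      ≤ 2 / Real.sqrt (Real.exp 1) * Real.sqrt (Real.sqrt n) *
        (1/(Real.sqrt (Real.sqrt (s:ℝ)))^3) := by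
  have hsR : (1:ℝ) ≤ (s:ℝ) := by exact_mod_cast hs1
  have hsR0 : (0:ℝ) < (s:ℝ) := by linarith
  have hRHS0 : 0 ≤ 2 / Real.sqrt (Real.exp 1) * Real.sqrt (Real.sqrt n) *
      (1/(Real.sqrt (Real.sqrt (s:ℝ)))^3) := by positivity
  rcases le_or_gt (Real.log (n/(s:ℝ))) 0 with hlog | hlog
  · rw [max_eq_right hlog, mul_zero, Real.sqrt_zero]; exact hRHS0
  · rw [max_eq_left hlog.le]
    have hq6 : (Real.sqrt (Real.sqrt (s:ℝ)))^3 * (Real.sqrt (Real.sqrt (s:ℝ)))^3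
        = (s:ℝ) * Real.sqrt (s:ℝ) := by
      have h1 : (Real.sqrt (Real.sqrt (s:ℝ)))^2 = Real.sqrt (s:ℝ) :=
        Real.sq_sqrt (Real.sqrt_nonneg _)
      have h2 : (Real.sqrt (s:ℝ))^2 = (s:ℝ) := Real.sq_sqrt hsR0.le
      calc (Real.sqrt (Real.sqrt (s:ℝ)))^3 * (Real.sqrt (Real.sqrt (s:ℝ)))^3
          = ((Real.sqrt (Real.sqrt (s:ℝ)))^2)^3 := by ring
        _ = (Real.sqrt (s:ℝ))^3 := by rw [h1]
        _ = (Real.sqrt (s:ℝ))^2 * Real.sqrt (s:ℝ) := by ring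
        _ = (s:ℝ) * Real.sqrt (s:ℝ) := by rw [h2]
    have hsqe : (Real.sqrt (Real.exp 1))^2 = Real.exp 1 := Real.sq_sqrt (Real.exp_pos 1).le
    have hsqn : (Real.sqrt (Real.sqrt n))^2 = Real.sqrt n := Real.sq_sqrt (Real.sqrt_nonneg _)
    have hRHSsq : (2 / Real.sqrt (Real.exp 1) * Real.sqrt (Real.sqrt n) *
        (1/(Real.sqrt (Real.sqrt (s:ℝ)))^3))^2
        = 4 / Real.exp 1 * Real.sqrt n / ((s:ℝ) * Real.sqrt (s:ℝ)) := by
      rw [mul_pow, mul_pow, div_pow, div_pow, hsqe, hsqn, one_pow]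
      rw [show ((Real.sqrt (Real.sqrt (s:ℝ)))^3)^2
          = (Real.sqrt (Real.sqrt (s:ℝ)))^3 * (Real.sqrt (Real.sqrt (s:ℝ)))^3 by ring, hq6]
      norm_num
      ring
    -- bound the argument of sqrt
    have harg : (2/(s:ℝ)) * Real.log (n/(s:ℝ))
        ≤ 4 / Real.exp 1 * Real.sqrt n / ((s:ℝ) * Real.sqrt (s:ℝ)) := by
      have h1 : Real.log (n/(s:ℝ)) ≤ 2 / Real.exp 1 * Real.sqrt (n/(s:ℝ)) :=
        moss_log_le _ (by positivity)
      have h2 : Real.sqrt (n/(s:ℝ)) = Real.sqrt n / Real.sqrt (s:ℝ) := Real.sqrt_div hn.le _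
      rw [h2] at h1
      have hss : 0 < Real.sqrt (s:ℝ) := Real.sqrt_pos.2 hsR0
      have he : 0 < Real.exp 1 := Real.exp_pos 1
      have hn' : 0 ≤ Real.sqrt n := Real.sqrt_nonneg n
      calc (2/(s:ℝ)) * Real.log (n/(s:ℝ))
          ≤ (2/(s:ℝ)) * (2 / Real.exp 1 * (Real.sqrt n / Real.sqrt (s:ℝ))) := by
            apply mul_le_mul_of_nonneg_left h1 (by positivity)
        _ = 4 / Real.exp 1 * Real.sqrt n / ((s:ℝ) * Real.sqrt (s:ℝ)) := by
            field_simp; ring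
    calc Real.sqrt ((2/(s:ℝ)) * Real.log (n/(s:ℝ)))
        ≤ Real.sqrt ((2 / Real.sqrt (Real.exp 1) * Real.sqrt (Real.sqrt n) *
            (1/(Real.sqrt (Real.sqrt (s:ℝ)))^3))^2) := by
          apply Real.sqrt_le_sqrt; rw [hRHSsq]; exact harg
      _ = _ := Real.sqrt_sq hRHS0


lemma moss_exp_le_cosh {y : ℝ} (t : ℝ) (hy : y ∈ Set.Icc (-1:ℝ) 1) :
    Real.exp (t * y) ≤ Real.cosh t + y * Real.sinh t := by
  have h := convexOn_exp.2 (Set.mem_univ (-t)) (Set.mem_univ t)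
    (show 0 ≤ (1 - y)/2 by linarith [hy.2]) (show 0 ≤ (1 + y)/2 by linarith [hy.1])
    (show (1 - y)/2 + (1 + y)/2 = 1 by ring)
  simp only [smul_eq_mul] at h
  have h1 : (1 - y)/2 * (-t) + (1 + y)/2 * t = t * y := by ring
  rw [h1] at h
  rw [Real.cosh_eq, Real.sinh_eq]
  linarith [h]

lemma moss_mgf_le {Ω : Type*} [MeasurableSpace Ω] (μ : Measure Ω) [IsProbabilityMeasure μ]
    (Y : Ω → ℝ) (hmeas : Measurable Y) (hb : ∀ ω, Y ω ∈ Set.Icc (-1:ℝ) 1)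
    (hmean : ∫ ω, Y ω ∂μ = 0) (t : ℝ) :
    mgf Y μ t ≤ Real.exp (t^2 / 2) := by
  have hYint : Integrable Y μ := by
    refine (integrable_const (1:ℝ)).mono' hmeas.aestronglyMeasurable ?_
    filter_upwards with ω
    rw [Real.norm_eq_abs, abs_le]; exact ⟨(hb ω).1, (hb ω).2⟩
  have hint : Integrable (fun ω => Real.exp (t * Y ω)) μ := by
    refine (integrable_const (Real.exp |t|)).mono'
      ((hmeas.const_mul t).exp).aestronglyMeasurable ?_
    filter_upwards with ω
    rw [Real.norm_eq_abs, abs_of_pos (Real.exp_pos _), Real.exp_le_exp]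
    calc t * Y ω ≤ |t * Y ω| := le_abs_self _
      _ = |t| * |Y ω| := abs_mul _ _
      _ ≤ |t| * 1 := by
          apply mul_le_mul_of_nonneg_left _ (abs_nonneg t)
          rw [abs_le]; exact ⟨(hb ω).1, (hb ω).2⟩
      _ = |t| := mul_one _
  have step1 : mgf Y μ t ≤ Real.cosh t := by
    have : mgf Y μ t ≤ ∫ ω, (Real.cosh t + Y ω * Real.sinh t) ∂μ := by
      refine integral_mono hint ((integrable_const _).add (hYint.mul_const _)) ?_
      intro ω; exact moss_exp_le_cosh t (hb ω)
    rwa [integral_add (integrable_const _) (hYint.mul_const _), integral_const,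
      integral_mul_const, hmean, zero_mul, probReal_univ, smul_eq_mul,
      one_mul, add_zero] at this
  exact step1.trans (Real.cosh_le_exp_half_sq t)

lemma moss_hoeffding {Ω : Type*} [MeasurableSpace Ω] (μ : Measure Ω) [IsProbabilityMeasure μ]
    (X : ℕ → Ω → ℝ) (μ₀ : ℝ)
    (hmeas : ∀ k, Measurable (X k))
    (hindep : iIndepFun X μ)
    (hbound : ∀ k ω, X k ω ∈ Set.Icc (0 : ℝ) 1)
    (hmean : ∀ k, ∫ ω, X k ω ∂μ = μ₀)
    (s : ℕ) (hs : 1 ≤ s) (t : ℝ) (ht : 0 < t) :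
    (μ {ω | (∑ k ∈ Finset.range s, X k ω) / s - μ₀ > t}).toReal
      ≤ Real.exp (-(s * t^2 / 2)) := by
  have hμ01 : 0 ≤ μ₀ ∧ μ₀ ≤ 1 := by
    constructor
    · rw [← hmean 0]; exact integral_nonneg fun ω => (hbound 0 ω).1
    · rw [← hmean 0]
      calc ∫ ω, X 0 ω ∂μ ≤ ∫ _, (1:ℝ) ∂μ := by
            refine integral_mono ?_ (integrable_const _) (fun ω => (hbound 0 ω).2)
            refine (integrable_const (1:ℝ)).mono' (hmeas 0).aestronglyMeasurable ?_
            filter_upwards with ω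
            rw [Real.norm_eq_abs, abs_of_nonneg (hbound 0 ω).1]; exact (hbound 0 ω).2
        _ = 1 := by simp
  set Y : ℕ → Ω → ℝ := fun k => (fun x => x - μ₀) ∘ X k with hY
  have hYmeas : ∀ k, Measurable (Y k) := fun k => (hmeas k).sub_const _
  have hYindep : iIndepFun Y μ :=
    hindep.comp _ (fun _ => measurable_id.sub_const μ₀)
  have hYb : ∀ k ω, Y k ω ∈ Set.Icc (-1:ℝ) 1 := fun k ω =>
    ⟨by simp only [hY, Function.comp_apply]; linarith [(hbound k ω).1, hμ01.2],
     by simp only [hY, Function.comp_apply]; linarith [(hbound k ω).2, hμ01.1]⟩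
  have hYint : ∀ k, Integrable (Y k) μ := by
    intro k
    refine (integrable_const (1:ℝ)).mono' (hYmeas k).aestronglyMeasurable ?_
    filter_upwards with ω
    rw [Real.norm_eq_abs, abs_le]; exact ⟨(hYb k ω).1, (hYb k ω).2⟩
  have hYmean : ∀ k, ∫ ω, Y k ω ∂μ = 0 := by
    intro k
    have hXint : Integrable (X k) μ := by
      refine (integrable_const (1:ℝ)).mono' (hmeas k).aestronglyMeasurable ?_
      filter_upwards with ω
      rw [Real.norm_eq_abs, abs_of_nonneg (hbound k ω).1]; exact (hbound k ω).2
    simp only [hY, Function.comp_apply]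
    rw [integral_sub hXint (integrable_const _), hmean k, integral_const]
    simp
  -- the sum
  set S : Ω → ℝ := ∑ k ∈ Finset.range s, Y k with hS
  have hSapp : ∀ ω, S ω = ∑ k ∈ Finset.range s, (X k ω - μ₀) := by
    intro ω; rw [hS]; simp [hY]
  have hsub : {ω | (∑ k ∈ Finset.range s, X k ω) / s - μ₀ > t} ⊆ {ω | (s:ℝ) * t ≤ S ω} := by
    intro ω hω
    simp only [Set.mem_setOf_eq] at hω ⊢
    have hspos : (0:ℝ) < s := by exact_mod_cast hs
    rw [hSapp, Finset.sum_sub_distrib, Finset.sum_const, Finset.card_range, nsmul_eq_mul]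
    have : (∑ k ∈ Finset.range s, X k ω) > s * (t + μ₀) := by
      rw [gt_iff_lt, ← lt_div_iff₀' hspos]; linarith [hω]
    linarith
  have hSmeas : Measurable S := by
    rw [hS]
    have : Measurable fun ω => ∑ k ∈ Finset.range s, Y k ω :=
      Finset.measurable_sum _ fun k _ => hYmeas k
    rwa [Finset.sum_fn]
  have hintS : Integrable (fun ω => Real.exp (t * S ω)) μ := by
    refine (integrable_const (Real.exp (t * s))).mono'
      ((hSmeas.const_mul t).exp).aestronglyMeasurable ?_
    filter_upwards with ω
    rw [Real.norm_eq_abs, abs_of_pos (Real.exp_pos _), Real.exp_le_exp]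
    have : S ω ≤ s := by
      rw [hSapp]
      calc ∑ k ∈ Finset.range s, (X k ω - μ₀) ≤ ∑ k ∈ Finset.range s, (1:ℝ) :=
            Finset.sum_le_sum fun k _ => by linarith [(hbound k ω).2, hμ01.1]
        _ = s := by simp
    exact mul_le_mul_of_nonneg_left this ht.le
  have hchern := measure_ge_le_exp_mul_mgf (μ := μ) (X := S) ((s:ℝ) * t) ht.le hintS
  have hmgf : mgf S μ t ≤ Real.exp (s * (t^2/2)) := by
    rw [hS, hYindep.mgf_sum hYmeas]
    calc ∏ k ∈ Finset.range s, mgf (Y k) μ t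
        ≤ ∏ k ∈ Finset.range s, Real.exp (t^2/2) := by
          refine Finset.prod_le_prod (fun k _ => mgf_nonneg) (fun k _ => ?_)
          exact moss_mgf_le μ (Y k) (hYmeas k) (hYb k) (hYmean k) t
      _ = Real.exp (s * (t^2/2)) := by
          rw [Finset.prod_const, Finset.card_range, ← Real.exp_nat_mul]
  calc (μ {ω | (∑ k ∈ Finset.range s, X k ω) / s - μ₀ > t}).toReal
      ≤ (μ {ω | (s:ℝ) * t ≤ S ω}).toReal := by
        apply ENNReal.toReal_mono (measure_ne_top μ _) (measure_mono hsub)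
    _ ≤ Real.exp (-t * ((s:ℝ)*t)) * mgf S μ t := hchern
    _ ≤ Real.exp (-t * ((s:ℝ)*t)) * Real.exp (s * (t^2/2)) := by
        exact mul_le_mul_of_nonneg_left hmgf (Real.exp_pos _).le
    _ = Real.exp (-(s * t^2 / 2)) := by
        rw [← Real.exp_add]; ring_nf

section
open Set

lemma moss_deriv_aux (s ε : ℝ) (hs : 0 < s) {b : ℝ} (hb : ε < b) :
    (∀ x ∈ Ici b, HasDerivAt (fun y => -2/(s*(y-ε))) (2/(s*(x-ε)^2)) x) := by
  intro x hx
  have hbx : b ≤ x := hx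
  have hxε : x - ε ≠ 0 := by intro h; linarith
  have h1 : HasDerivAt (fun y : ℝ => y - ε) 1 x := (hasDerivAt_id x).sub_const ε
  have h2 : HasDerivAt (fun y : ℝ => (y - ε)⁻¹) (-1 / (x-ε)^2) x := h1.inv hxε
  have h3 := h2.const_mul (-2/s)
  have hfun : (fun y : ℝ => -2/(s*(y-ε))) = fun y : ℝ => -2/s * (y-ε)⁻¹ := by
    funext y
    rw [div_mul_eq_div_div, div_eq_mul_inv (-2/s)]
  rw [hfun]
  refine h3.congr_deriv ?_
  field_simp

lemma moss_int_inv_sq (s ε b : ℝ) (hs : 0 < s) (hb : ε < b) :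
    IntegrableOn (fun y => 2/(s*(y-ε)^2)) (Set.Ioi b) ∧
      ∫ y in Set.Ioi b, 2/(s*(y-ε)^2) = 2/(s*(b-ε)) := by
  have hderiv := moss_deriv_aux s ε hs hb
  have hcont : ContinuousWithinAt (fun y => -2/(s*(y-ε))) (Ici b) b :=
    (hderiv b self_mem_Ici).continuousAt.continuousWithinAt
  have hpos : ∀ x ∈ Ioi b, 0 ≤ 2/(s*(x-ε)^2) := by
    intro x hx; have : b < x := hx; positivity
  have htend : Filter.Tendsto (fun y => -2/(s*(y-ε))) Filter.atTop (nhds 0) := by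
    have h1 : Filter.Tendsto (fun y : ℝ => (y - ε)⁻¹) Filter.atTop (nhds 0) :=
      Filter.Tendsto.inv_tendsto_atTop (Filter.tendsto_atTop_add_const_right _ (-ε) Filter.tendsto_id)
    have h2 := h1.const_mul (-2/s)
    simp only [mul_zero] at h2
    convert h2 using 2 with y
    field_simp
  constructor
  · exact integrableOn_Ioi_deriv_of_nonneg hcont (fun x hx => hderiv x (Set.mem_Ici.2 (le_of_lt hx))) hpos htend
  · rw [integral_Ioi_of_hasDerivAt_of_nonneg hcont (fun x hx => hderiv x (Set.mem_Ici.2 (le_of_lt hx))) hpos htend]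
    field_simp
    ring

lemma moss_deriv_aux4 (c : ℝ) {x : ℝ} (hx : 0 < x) :
    HasDerivAt (fun y => -c/3 * (y^3)⁻¹) (c/x^4) x := by
  have h1 : HasDerivAt (fun y : ℝ => y^3) (3*x^2) x := by
    simpa using hasDerivAt_pow 3 x
  have h2 := (h1.inv (by positivity)).const_mul (-c/3)
  refine h2.congr_deriv ?_
  field_simp

lemma moss_int_inv_quart (c ζ : ℝ) (hc : 0 ≤ c) (hζ : 0 < ζ) :
    IntegrableOn (fun y => c/y^4) (Set.Ioi ζ) ∧
      ∫ y in Set.Ioi ζ, c/y^4 = c/(3*ζ^3) := by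
  have hderiv : ∀ x ∈ Ici ζ, HasDerivAt (fun y => -c/3 * (y^3)⁻¹) (c/x^4) x :=
    fun x hx => moss_deriv_aux4 c (lt_of_lt_of_le hζ hx)
  have hcont : ContinuousWithinAt (fun y => -c/3 * (y^3)⁻¹) (Ici ζ) ζ :=
    (hderiv ζ self_mem_Ici).continuousAt.continuousWithinAt
  have hpos : ∀ x ∈ Ioi ζ, 0 ≤ c/x^4 := by
    intro x hx; have : ζ < x := hx; positivity
  have htend : Filter.Tendsto (fun y : ℝ => -c/3 * (y^3)⁻¹) Filter.atTop (nhds 0) := by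
    have h1 : Filter.Tendsto (fun y : ℝ => (y^3)⁻¹) Filter.atTop (nhds 0) :=
      Filter.Tendsto.inv_tendsto_atTop (Filter.tendsto_pow_atTop (by norm_num))
    have h2 := h1.const_mul (-c/3)
    simpa using h2
  constructor
  · exact integrableOn_Ioi_deriv_of_nonneg hcont (fun x hx => hderiv x (Set.mem_Ici.2 (le_of_lt hx))) hpos htend
  · rw [integral_Ioi_of_hasDerivAt_of_nonneg hcont (fun x hx => hderiv x (Set.mem_Ici.2 (le_of_lt hx))) hpos htend]
    field_simp
    ring

end

set_option maxHeartbeats 2000000 in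
/-- **Integrated MOSS deviation bound.** Let `(X k)` be i.i.d. `[0,1]`-valued with mean `μ₀`,
`X̄ s` the empirical mean of the first `s` samples, `M, T` reals with `0 < 2M ≤ T`, `m ≥ 1`,
and `ζ = √(2M/T)`.  Then
`∫_ζ^∞ ∑_{s=1}^m P(X̄ s + √((2/s)·max(log(T/(M·s)), 0)) - μ₀ > y) dy ≤ 19·√(T/M)`. -/
theorem integrated_moss_deviation
    {Ω : Type*} [MeasurableSpace Ω] (μ : Measure Ω) [IsProbabilityMeasure μ]
    (X : ℕ → Ω → ℝ) (μ₀ : ℝ)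
    (hmeas : ∀ k, Measurable (X k))
    (hindep : iIndepFun X μ)
    (hident : ∀ k l, IdentDistrib (X k) (X l) μ μ)
    (hbound : ∀ k ω, X k ω ∈ Set.Icc (0 : ℝ) 1)
    (hmean : ∀ k, ∫ ω, X k ω ∂μ = μ₀)
    (M T : ℝ) (hM : 0 < M) (hMT : 2 * M ≤ T)
    (m : ℕ) (hm : 1 ≤ m) :
    ∫ y in Set.Ioi (Real.sqrt (2 * M / T)),
        ∑ s ∈ Finset.Icc 1 m,
          (μ {ω | (∑ k ∈ Finset.range s, X k ω) / s +
            Real.sqrt ((2 / s) * max (Real.log (T / (M * s))) 0) - μ₀ > y}).toReal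
      ≤ 19 * Real.sqrt (T / M) := by
  have hT : 0 < T := lt_of_lt_of_le (by linarith) hMT
  set n : ℝ := T / M with hndef
  have hn2 : 2 ≤ n := (le_div_iff₀ hM).2 (by linarith)
  have hn0 : 0 < n := by linarith
  have hrw : ∀ s : ℕ, T / (M * (s:ℝ)) = n / (s:ℝ) := by
    intro s
    rcases eq_or_ne (s:ℝ) 0 with h | h
    · rw [h, mul_zero, div_zero, div_zero]
    · rw [hndef]; field_simp
  have h2MT : 2 * M / T = 2 / n := by
    rw [hndef]; field_simp
  simp only [hrw, h2MT]
  set ζ : ℝ := Real.sqrt (2 / n) with hζdef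
  have hζpos : 0 < ζ := Real.sqrt_pos.2 (by positivity)
  have hζsq : ζ^2 = 2/n := Real.sq_sqrt (by positivity)
  have hζle1 : ζ ≤ 1 := by
    rw [hζdef, show (1:ℝ) = Real.sqrt 1 by simp]
    apply Real.sqrt_le_sqrt
    rw [div_le_one hn0]; linarith
  -- notation
  set E : ℕ → ℝ := fun s => Real.sqrt ((2 / (s:ℝ)) * max (Real.log (n / (s:ℝ))) 0) with hEdef
  have hEnonneg : ∀ s, 0 ≤ E s := fun s => Real.sqrt_nonneg _
  set β : ℕ → ℝ := fun s => E s + Real.sqrt (2 / (s:ℝ)) with hβdef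
  set filt := (Finset.Icc 1 m).filter (fun s : ℕ => (s:ℝ) < n) with hfiltdef
  set G : ℝ → ℝ := fun y =>
      (∑ s ∈ filt, (Set.indicator (Set.Ioc ζ (β s)) (fun _ => (1:ℝ)) y
        + Set.indicator (Set.Ioi (β s)) (fun z => 2/((s:ℝ)*(z - E s)^2)) y))
      + (32/n)/y^4 with hGdef
  -- facts about members of filt
  have hfilt_mem : ∀ s ∈ filt, 1 ≤ s ∧ (s:ℝ) < n := by
    intro s hs
    rw [hfiltdef, Finset.mem_filter, Finset.mem_Icc] at hs
    exact ⟨hs.1.1, hs.2⟩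
  have hβpos : ∀ s ∈ filt, E s < β s := by
    intro s hs
    have h1 : (1:ℝ) ≤ (s:ℝ) := by exact_mod_cast (hfilt_mem s hs).1
    rw [hβdef]
    simp only [lt_add_iff_pos_right]
    exact Real.sqrt_pos.2 (by positivity)
  -- integrability of pieces
  have hI1 : ∀ s ∈ filt, Integrable
      (Set.indicator (Set.Ioc ζ (β s)) (fun _ => (1:ℝ))) volume := by
    intro s hs
    rw [integrable_indicator_iff measurableSet_Ioc]
    exact integrableOn_const measure_Ioc_lt_top.ne
  have hI2 : ∀ s ∈ filt, Integrable
      (Set.indicator (Set.Ioi (β s)) (fun z => 2/((s:ℝ)*(z - E s)^2))) volume := by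
    intro s hs
    rw [integrable_indicator_iff measurableSet_Ioi]
    have h1 : (0:ℝ) < (s:ℝ) := by
      have := (hfilt_mem s hs).1; positivity
    exact (moss_int_inv_sq (s:ℝ) (E s) (β s) h1 (hβpos s hs)).1
  have hIq : IntegrableOn (fun y => (32/n)/y^4) (Set.Ioi ζ) volume :=
    (moss_int_inv_quart (32/n) ζ (by positivity) hζpos).1
  have hGint : IntegrableOn G (Set.Ioi ζ) volume := by
    rw [hGdef]
    apply Integrable.add _ hIq
    apply MeasureTheory.integrable_finset_sum
    intro s hs
    exact ((hI1 s hs).add (hI2 s hs)).integrableOn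
  -- pointwise bound
  have hpt : ∀ y ∈ Set.Ioi ζ,
      (∑ s ∈ Finset.Icc 1 m,
        (μ {ω | (∑ k ∈ Finset.range s, X k ω) / (s:ℝ) + E s - μ₀ > y}).toReal) ≤ G y := by
    intro y hy
    have hyζ : ζ < y := hy
    have hy0 : 0 < y := lt_trans hζpos hyζ
    rw [← Finset.sum_filter_add_sum_filter_not (Finset.Icc 1 m) (fun s : ℕ => (s:ℝ) < n)]
    simp only [hGdef]
    rw [← hfiltdef]
    apply add_le_add
    · -- sum over filt
      apply Finset.sum_le_sum
      intro s hs
      obtain ⟨hs1, hsn⟩ := hfilt_mem s hs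
      have hs1R : (1:ℝ) ≤ (s:ℝ) := by exact_mod_cast hs1
      have hs0 : (0:ℝ) < (s:ℝ) := by linarith
      by_cases hyβ : y ≤ β s
      · have hind1 : Set.indicator (Set.Ioc ζ (β s)) (fun _ => (1:ℝ)) y = 1 :=
          Set.indicator_of_mem (Set.mem_Ioc.2 ⟨hyζ, hyβ⟩) _
        have hind2 : 0 ≤ Set.indicator (Set.Ioi (β s)) (fun z => 2/((s:ℝ)*(z - E s)^2)) y :=
          Set.indicator_nonneg (fun z _ => by positivity) y
        have hf1 : (μ {ω | (∑ k ∈ Finset.range s, X k ω) / (s:ℝ) + E s - μ₀ > y}).toReal ≤ 1 := by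
          calc (μ _).toReal ≤ (μ Set.univ).toReal :=
                ENNReal.toReal_mono (measure_ne_top μ _) (measure_mono (Set.subset_univ _))
            _ = 1 := by simp
        linarith
      · push_neg at hyβ
        have hind1 : Set.indicator (Set.Ioc ζ (β s)) (fun _ => (1:ℝ)) y = 0 :=
          Set.indicator_of_notMem (fun hmem => absurd (Set.mem_Ioc.1 hmem).2 (not_le.2 hyβ)) _
        have hind2 : Set.indicator (Set.Ioi (β s)) (fun z => 2/((s:ℝ)*(z - E s)^2)) y
            = 2/((s:ℝ)*(y - E s)^2) := Set.indicator_of_mem (Set.mem_Ioi.2 hyβ) _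
        rw [hind1, hind2, zero_add]
        have htpos : 0 < y - E s := by
          have := hβpos s hs; linarith
        have hset : {ω | (∑ k ∈ Finset.range s, X k ω) / (s:ℝ) + E s - μ₀ > y}
            = {ω | (∑ k ∈ Finset.range s, X k ω) / (s:ℝ) - μ₀ > y - E s} := by
          ext ω; simp only [Set.mem_setOf_eq]; constructor <;> intro h <;> linarith
        rw [hset]
        calc (μ {ω | (∑ k ∈ Finset.range s, X k ω) / (s:ℝ) - μ₀ > y - E s}).toReal
            ≤ Real.exp (-((s:ℝ) * (y - E s)^2 / 2)) :=
              moss_hoeffding μ X μ₀ hmeas hindep hbound hmean s hs1 (y - E s) htpos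
          _ ≤ 1/((s:ℝ) * (y - E s)^2 / 2) := moss_exp_neg_le _ (by positivity)
          _ = 2/((s:ℝ)*(y - E s)^2) := one_div_div _ _
    · -- tail sum
      have hsum : ∑ s ∈ (Finset.Icc 1 m).filter (fun s : ℕ => ¬((s:ℝ) < n)),
          1/((s:ℝ))^2 ≤ 2/n := by
        have hsub : (Finset.Icc 1 m).filter (fun s : ℕ => ¬((s:ℝ) < n))
            ⊆ Finset.Icc ⌈n⌉₊ m := by
          intro s hs
          rw [Finset.mem_filter, Finset.mem_Icc] at hs
          rw [Finset.mem_Icc]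
          exact ⟨Nat.ceil_le.2 (not_lt.1 hs.2), hs.1.2⟩
        calc ∑ s ∈ (Finset.Icc 1 m).filter (fun s : ℕ => ¬((s:ℝ) < n)), 1/((s:ℝ))^2
            ≤ ∑ s ∈ Finset.Icc ⌈n⌉₊ m, 1/((s:ℝ))^2 :=
              Finset.sum_le_sum_of_subset_of_nonneg hsub (fun s _ _ => by positivity)
          _ ≤ ∑ s ∈ Finset.Icc ⌈n⌉₊ m, (2/((s:ℕ):ℝ) - 2/(((s+1):ℕ):ℝ)) := by
              apply Finset.sum_le_sum
              intro s hs
              rw [Finset.mem_Icc] at hs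
              have h1 : (1:ℝ) ≤ (s:ℝ) := by
                have h2 : n ≤ (⌈n⌉₊:ℝ) := Nat.le_ceil n
                have h3 : ((⌈n⌉₊:ℕ):ℝ) ≤ (s:ℝ) := by exact_mod_cast hs.1
                linarith
              have hs0 : (0:ℝ) < (s:ℝ) := by linarith
              push_cast
              rw [div_sub_div _ _ (ne_of_gt hs0) (by positivity),
                div_le_div_iff₀ (by positivity) (by positivity)]
              nlinarith
          _ ≤ 2/((⌈n⌉₊:ℕ):ℝ) :=
              moss_sum_telescope_le (fun k : ℕ => 2/(k:ℝ)) (fun k => by positivity) _ _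
          _ ≤ 2/n := by
              have h2 : n ≤ (⌈n⌉₊:ℝ) := Nat.le_ceil n
              gcongr
      calc ∑ s ∈ (Finset.Icc 1 m).filter (fun s : ℕ => ¬((s:ℝ) < n)),
            (μ {ω | (∑ k ∈ Finset.range s, X k ω) / (s:ℝ) + E s - μ₀ > y}).toReal
          ≤ ∑ s ∈ (Finset.Icc 1 m).filter (fun s : ℕ => ¬((s:ℝ) < n)),
            (16/y^4) * (1/((s:ℝ))^2) := by
            apply Finset.sum_le_sum
            intro s hs
            rw [Finset.mem_filter, Finset.mem_Icc] at hs
            obtain ⟨⟨hs1, hsm⟩, hns'⟩ := hs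
            have hns : n ≤ (s:ℝ) := not_lt.1 hns'
            have hs0 : (0:ℝ) < (s:ℝ) := lt_of_lt_of_le hn0 hns
            have hE0 : E s = 0 := by
              simp only [hEdef]
              have hlog : Real.log (n/(s:ℝ)) ≤ 0 :=
                Real.log_nonpos (by positivity) ((div_le_one hs0).2 hns)
              rw [max_eq_right hlog, mul_zero, Real.sqrt_zero]
            have hset : {ω | (∑ k ∈ Finset.range s, X k ω) / (s:ℝ) + E s - μ₀ > y}
                = {ω | (∑ k ∈ Finset.range s, X k ω) / (s:ℝ) - μ₀ > y} := by
              ext ω; simp only [Set.mem_setOf_eq, hE0]; constructor <;> intro h <;> linarith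
            rw [hset]
            calc (μ {ω | (∑ k ∈ Finset.range s, X k ω) / (s:ℝ) - μ₀ > y}).toReal
                ≤ Real.exp (-((s:ℝ) * y^2 / 2)) :=
                  moss_hoeffding μ X μ₀ hmeas hindep hbound hmean s hs1 y hy0
              _ ≤ 4/((s:ℝ) * y^2 / 2)^2 := moss_exp_neg_le_sq _ (by positivity)
              _ = (16/y^4) * (1/((s:ℝ))^2) := by
                  field_simp
                  ring
        _ = (16/y^4) * ∑ s ∈ (Finset.Icc 1 m).filter (fun s : ℕ => ¬((s:ℝ) < n)),
              1/((s:ℝ))^2 := by rw [Finset.mul_sum]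
        _ ≤ (16/y^4) * (2/n) := by
            apply mul_le_mul_of_nonneg_left hsum (by positivity)
        _ = (32/n)/y^4 := by
            field_simp
            ring
  -- nonnegativity
  have hFnonneg : ∀ y, 0 ≤ ∑ s ∈ Finset.Icc 1 m,
      (μ {ω | (∑ k ∈ Finset.range s, X k ω) / (s:ℝ) + E s - μ₀ > y}).toReal := by
    intro y
    exact Finset.sum_nonneg fun s _ => ENNReal.toReal_nonneg
  -- integral bound of G
  have hGbound : ∫ y in Set.Ioi ζ, G y ≤ 19 * Real.sqrt n := by
    set N := ⌊n⌋₊ with hNdef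
    have hNn : (N:ℝ) ≤ n := Nat.floor_le hn0.le
    have hsn : 0 ≤ Real.sqrt n := Real.sqrt_nonneg n
    -- step 1: split the integral
    have hFsumInt : IntegrableOn (fun y => ∑ s ∈ filt,
        (Set.indicator (Set.Ioc ζ (β s)) (fun _ => (1:ℝ)) y
          + Set.indicator (Set.Ioi (β s)) (fun z => 2/((s:ℝ)*(z - E s)^2)) y))
        (Set.Ioi ζ) volume := by
      apply MeasureTheory.integrable_finset_sum
      intro s hs
      exact ((hI1 s hs).add (hI2 s hs)).integrableOn
    have hsplit : ∫ y in Set.Ioi ζ, G y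
        = (∑ s ∈ filt, ∫ y in Set.Ioi ζ,
            (Set.indicator (Set.Ioc ζ (β s)) (fun _ => (1:ℝ)) y
              + Set.indicator (Set.Ioi (β s)) (fun z => 2/((s:ℝ)*(z - E s)^2)) y))
          + ∫ y in Set.Ioi ζ, (32/n)/y^4 := by
      simp only [hGdef]
      rw [MeasureTheory.integral_add hFsumInt hIq]
      congr 1
      exact MeasureTheory.integral_finset_sum _ (fun s hs => ((hI1 s hs).add (hI2 s hs)).integrableOn)
    rw [hsplit]
    -- step 2: per-s bound
    have hterm : ∀ s ∈ filt, (∫ y in Set.Ioi ζ,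
        (Set.indicator (Set.Ioc ζ (β s)) (fun _ => (1:ℝ)) y
          + Set.indicator (Set.Ioi (β s)) (fun z => 2/((s:ℝ)*(z - E s)^2)) y))
        ≤ E s + 2 * Real.sqrt (2/(s:ℝ)) := by
      intro s hs
      obtain ⟨hs1, hsnn⟩ := hfilt_mem s hs
      have hs1R : (1:ℝ) ≤ (s:ℝ) := by exact_mod_cast hs1
      have hs0 : (0:ℝ) < (s:ℝ) := by linarith
      have hsq2 : 0 < Real.sqrt (2/(s:ℝ)) := Real.sqrt_pos.2 (by positivity)
      rw [MeasureTheory.integral_add (hI1 s hs).integrableOn (hI2 s hs).integrableOn]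
      have hb1 : (∫ y in Set.Ioi ζ, Set.indicator (Set.Ioc ζ (β s)) (fun _ => (1:ℝ)) y)
          ≤ E s + Real.sqrt (2/(s:ℝ)) := by
        calc (∫ y in Set.Ioi ζ, Set.indicator (Set.Ioc ζ (β s)) (fun _ => (1:ℝ)) y)
            ≤ ∫ y, Set.indicator (Set.Ioc ζ (β s)) (fun _ => (1:ℝ)) y :=
              setIntegral_le_integral (hI1 s hs)
                (Filter.Eventually.of_forall fun y =>
                  Set.indicator_nonneg (fun _ _ => zero_le_one) y)
          _ = (volume (Set.Ioc ζ (β s))).toReal • (1:ℝ) :=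
              integral_indicator_const (1:ℝ) measurableSet_Ioc
          _ ≤ E s + Real.sqrt (2/(s:ℝ)) := by
              rw [smul_eq_mul, mul_one, Real.volume_Ioc]
              rcases le_total (β s) ζ with h | h
              · rw [ENNReal.ofReal_eq_zero.2 (by linarith)]
                simp only [ENNReal.toReal_zero]
                positivity
              · rw [ENNReal.toReal_ofReal (by linarith)]
                have : β s = E s + Real.sqrt (2/(s:ℝ)) := by rw [hβdef]
                linarith [hζpos]
      have hb2 : (∫ y in Set.Ioi ζ, Set.indicator (Set.Ioi (β s)) (fun z => 2/((s:ℝ)*(z - E s)^2)) y)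
          ≤ Real.sqrt (2/(s:ℝ)) := by
        have hval : (∫ y, Set.indicator (Set.Ioi (β s)) (fun z => 2/((s:ℝ)*(z - E s)^2)) y)
            = 2/((s:ℝ)*(β s - E s)) := by
          rw [MeasureTheory.integral_indicator measurableSet_Ioi]
          exact (moss_int_inv_sq (s:ℝ) (E s) (β s) hs0 (hβpos s hs)).2
        have hβE : β s - E s = Real.sqrt (2/(s:ℝ)) := by rw [hβdef]; ring
        have hkey : (s:ℝ) * Real.sqrt (2/(s:ℝ)) * Real.sqrt (2/(s:ℝ)) = 2 := by
          rw [mul_assoc, Real.mul_self_sqrt (by positivity)]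
          field_simp
        calc (∫ y in Set.Ioi ζ, Set.indicator (Set.Ioi (β s)) (fun z => 2/((s:ℝ)*(z - E s)^2)) y)
            ≤ ∫ y, Set.indicator (Set.Ioi (β s)) (fun z => 2/((s:ℝ)*(z - E s)^2)) y :=
              setIntegral_le_integral (hI2 s hs)
                (Filter.Eventually.of_forall fun y =>
                  Set.indicator_nonneg (fun z _ => by positivity) y)
          _ = 2/((s:ℝ)*(β s - E s)) := hval
          _ ≤ Real.sqrt (2/(s:ℝ)) := by
              rw [hβE, div_le_iff₀ (by positivity)]
              linarith [hkey]
      linarith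
    -- step 3: sum the per-s bounds
    have hsum1 : (∑ s ∈ filt, ∫ y in Set.Ioi ζ,
        (Set.indicator (Set.Ioc ζ (β s)) (fun _ => (1:ℝ)) y
          + Set.indicator (Set.Ioi (β s)) (fun z => 2/((s:ℝ)*(z - E s)^2)) y))
        ≤ ∑ s ∈ Finset.Icc 1 N, (E s + 2 * Real.sqrt (2/(s:ℝ))) := by
      calc (∑ s ∈ filt, ∫ y in Set.Ioi ζ,
          (Set.indicator (Set.Ioc ζ (β s)) (fun _ => (1:ℝ)) y
            + Set.indicator (Set.Ioi (β s)) (fun z => 2/((s:ℝ)*(z - E s)^2)) y))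
          ≤ ∑ s ∈ filt, (E s + 2 * Real.sqrt (2/(s:ℝ))) := Finset.sum_le_sum hterm
        _ ≤ ∑ s ∈ Finset.Icc 1 N, (E s + 2 * Real.sqrt (2/(s:ℝ))) := by
            apply Finset.sum_le_sum_of_subset_of_nonneg
            · intro s hs
              obtain ⟨hs1, hsnn⟩ := hfilt_mem s hs
              rw [Finset.mem_Icc]
              exact ⟨hs1, Nat.le_floor hsnn.le⟩
            · intro s _ _
              have := hEnonneg s
              positivity
    -- step 4: bound the two sums
    have hE : ∑ s ∈ Finset.Icc 1 N, E s ≤ 5 * Real.sqrt n := by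
      have hsqe : (1.6:ℝ) ≤ Real.sqrt (Real.exp 1) := by
        rw [show (1.6:ℝ) = Real.sqrt (1.6^2) by rw [Real.sqrt_sq]; norm_num]
        apply Real.sqrt_le_sqrt
        nlinarith [Real.exp_one_gt_d9]
      have hsqe0 : 0 < Real.sqrt (Real.exp 1) := by linarith
      have huu : Real.sqrt (Real.sqrt n) * Real.sqrt (Real.sqrt n) = Real.sqrt n :=
        Real.mul_self_sqrt hsn
      have hNle : Real.sqrt (Real.sqrt (N:ℝ)) ≤ Real.sqrt (Real.sqrt n) :=
        Real.sqrt_le_sqrt (Real.sqrt_le_sqrt hNn)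
      calc ∑ s ∈ Finset.Icc 1 N, E s
          ≤ ∑ s ∈ Finset.Icc 1 N, (2 / Real.sqrt (Real.exp 1) * Real.sqrt (Real.sqrt n) *
              (1/(Real.sqrt (Real.sqrt (s:ℝ)))^3)) := by
            apply Finset.sum_le_sum
            intro s hs
            rw [Finset.mem_Icc] at hs
            exact moss_E_bound n hn0 s hs.1
        _ = (2 / Real.sqrt (Real.exp 1) * Real.sqrt (Real.sqrt n)) *
              ∑ s ∈ Finset.Icc 1 N, 1/(Real.sqrt (Real.sqrt (s:ℝ)))^3 := by
            rw [Finset.mul_sum]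
        _ ≤ (2 / Real.sqrt (Real.exp 1) * Real.sqrt (Real.sqrt n)) *
              (4 * Real.sqrt (Real.sqrt (N:ℝ))) := by
            apply mul_le_mul_of_nonneg_left (moss_sum_inv_q3 N) (by positivity)
        _ ≤ (2 / Real.sqrt (Real.exp 1) * Real.sqrt (Real.sqrt n)) *
              (4 * Real.sqrt (Real.sqrt n)) := by
            apply mul_le_mul_of_nonneg_left _ (by positivity)
            linarith
        _ = 8 / Real.sqrt (Real.exp 1) * Real.sqrt n := by
            rw [show (2 / Real.sqrt (Real.exp 1) * Real.sqrt (Real.sqrt n)) *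
                (4 * Real.sqrt (Real.sqrt n))
                = 8 / Real.sqrt (Real.exp 1) *
                  (Real.sqrt (Real.sqrt n) * Real.sqrt (Real.sqrt n)) by ring, huu]
        _ ≤ 5 * Real.sqrt n := by
            apply mul_le_mul_of_nonneg_right _ hsn
            rw [div_le_iff₀ hsqe0]
            nlinarith
    have hS2 : ∑ s ∈ Finset.Icc 1 N, 2 * Real.sqrt (2/(s:ℝ)) ≤ 6 * Real.sqrt n := by
      have hsqrt2 : Real.sqrt 2 ≤ 1.5 := by
        rw [show (1.5:ℝ) = Real.sqrt (1.5^2) by rw [Real.sqrt_sq]; norm_num]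
        apply Real.sqrt_le_sqrt
        norm_num
      have hsqrt2' : 0 ≤ Real.sqrt 2 := Real.sqrt_nonneg 2
      have hNle : Real.sqrt (N:ℝ) ≤ Real.sqrt n := Real.sqrt_le_sqrt hNn
      calc ∑ s ∈ Finset.Icc 1 N, 2 * Real.sqrt (2/(s:ℝ))
          = (2 * Real.sqrt 2) * ∑ s ∈ Finset.Icc 1 N, 1/Real.sqrt (s:ℝ) := by
            rw [Finset.mul_sum]
            apply Finset.sum_congr rfl
            intro s _
            rw [Real.sqrt_div (by norm_num : (0:ℝ) ≤ 2)]
            ring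
        _ ≤ (2 * Real.sqrt 2) * (2 * Real.sqrt (N:ℝ)) := by
            apply mul_le_mul_of_nonneg_left (moss_sum_inv_sqrt N) (by positivity)
        _ ≤ 6 * Real.sqrt n := by nlinarith [Real.sqrt_nonneg (N:ℝ)]
    -- step 5: quart integral
    have hq : ∫ y in Set.Ioi ζ, (32/n)/y^4 ≤ 4 * Real.sqrt n := by
      rw [(moss_int_inv_quart (32/n) ζ (by positivity) hζpos).2]
      have hζ3 : ζ^3 = (2/n)*ζ := by
        calc ζ^3 = ζ^2*ζ := by ring
          _ = (2/n)*ζ := by rw [hζsq]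
      have hζn : ζ * Real.sqrt n = Real.sqrt 2 := by
        rw [hζdef, ← Real.sqrt_mul (by positivity)]
        congr 1
        field_simp
      have hsqrt2 : (1.4:ℝ) ≤ Real.sqrt 2 := by
        rw [show (1.4:ℝ) = Real.sqrt (1.4^2) by rw [Real.sqrt_sq]; norm_num]
        apply Real.sqrt_le_sqrt
        norm_num
      have hval : (32/n)/(3*ζ^3) = 16/(3*ζ) := by
        rw [hζ3]
        field_simp
        ring
      rw [hval, div_le_iff₀ (by positivity)]
      nlinarith [hζn, hsqrt2, hζpos, hsn]
    -- combine
    have hsum2 : ∑ s ∈ Finset.Icc 1 N, (E s + 2 * Real.sqrt (2/(s:ℝ)))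
        = (∑ s ∈ Finset.Icc 1 N, E s) + ∑ s ∈ Finset.Icc 1 N, 2 * Real.sqrt (2/(s:ℝ)) :=
      Finset.sum_add_distrib
    linarith [hsum1, hE, hS2, hq, hsum2.le, hsum2.ge]
  calc ∫ y in Set.Ioi ζ, ∑ s ∈ Finset.Icc 1 m,
        (μ {ω | (∑ k ∈ Finset.range s, X k ω) / (s:ℝ) + E s - μ₀ > y}).toReal
      ≤ ∫ y in Set.Ioi ζ, G y := by
        apply integral_mono_of_nonneg
        · exact Filter.Eventually.of_forall fun y => hFnonneg y
        · exact hGint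
        · filter_upwards [ae_restrict_mem measurableSet_Ioi] with y hy
          exact hpt y hy
    _ ≤ 19 * Real.sqrt n := hGbound
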